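/- Let n ≥ 3 and A₁, A₂, A₃ be real symmetric n×n matrices with s₁A₁ + s₂A₂ + s₃A₃ positive definite for some s ∈ ℝ³. Then the set {(xᵀA₁x, xᵀA₂x, xᵀA₃x) : x ∈ ℝⁿ} is closed in ℝ³. -/

import Mathlib

open Matrix Filter Topology Bornology

lemma quad_continuous {n : ℕ} (A : Matrix (Fin n) (Fin n) ℝ) :
    Continuous fun x : Fin n → ℝ => x ⬝ᵥ A *ᵥ x := by
  simp only [dotProduct, mulVec]
  fun_prop

lemma posdef_coercive {n : ℕ} (hn : 0 < n) {B : Matrix (Fin n) (Fin n) ℝ}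
    (hB : B.PosDef) : ∃ c > 0, ∀ x : Fin n → ℝ, c * ‖x‖ ^ 2 ≤ x ⬝ᵥ B *ᵥ x := by
  have hsph : IsCompact (Metric.sphere (0 : Fin n → ℝ) 1) := isCompact_sphere _ _
  haveI : Nonempty (Fin n) := Fin.pos_iff_nonempty.mp hn
  have hne : (Metric.sphere (0 : Fin n → ℝ) 1).Nonempty :=
    (NormedSpace.sphere_nonempty).2 zero_le_one
  obtain ⟨z, hz, hmin⟩ := hsph.exists_isMinOn hne ((quad_continuous B).continuousOn)
  have hz0 : z ≠ 0 := by
    intro h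
    rw [mem_sphere_iff_norm, h, sub_zero, norm_zero] at hz
    norm_num at hz
  refine ⟨z ⬝ᵥ B *ᵥ z, hB.dotProduct_mulVec_pos hz0, fun x => ?_⟩
  rcases eq_or_ne x 0 with rfl | hx
  · simp
  · have hnx : ‖x‖ ≠ 0 := norm_ne_zero_iff.2 hx
    have hmem : ‖x‖⁻¹ • x ∈ Metric.sphere (0 : Fin n → ℝ) 1 := by
      simp [norm_smul, inv_mul_cancel₀ hnx]
    have := hmin hmem
    simp only [Set.mem_setOf_eq] at this
    have hsc : (‖x‖⁻¹ • x) ⬝ᵥ B *ᵥ (‖x‖⁻¹ • x) = ‖x‖⁻¹ ^ 2 * (x ⬝ᵥ B *ᵥ x) := by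
      simp [smul_dotProduct, mulVec_smul, smul_smul, sq, smul_eq_mul]
      ring
    rw [hsc] at this
    have h2 : (0:ℝ) < ‖x‖ ^ 2 := by positivity
    calc z ⬝ᵥ B *ᵥ z * ‖x‖^2 ≤ (‖x‖⁻¹ ^ 2 * (x ⬝ᵥ B *ᵥ x)) * ‖x‖^2 := by
          exact mul_le_mul_of_nonneg_right this h2.le
      _ = x ⬝ᵥ B *ᵥ x := by field_simp

theorem polyak_closedness (n : ℕ) (hn : 3 ≤ n)
    (A₁ A₂ A₃ : Matrix (Fin n) (Fin n) ℝ)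
    (h₁ : A₁.IsSymm) (h₂ : A₂.IsSymm) (h₃ : A₃.IsSymm)
    (hs : ∃ s : Fin 3 → ℝ, (s 0 • A₁ + s 1 • A₂ + s 2 • A₃).PosDef) :
    IsClosed {y : Fin 3 → ℝ | ∃ x : Fin n → ℝ,
        y = ![x ⬝ᵥ A₁ *ᵥ x, x ⬝ᵥ A₂ *ᵥ x, x ⬝ᵥ A₃ *ᵥ x]} := by
  obtain ⟨s, hB⟩ := hs
  obtain ⟨c, hc, hcoer⟩ := posdef_coercive (by omega) hB
  apply IsSeqClosed.isClosed
  intro y y₀ hy hlim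
  choose x hx using hy
  have key : ∀ k, c * ‖x k‖ ^ 2 ≤ s 0 * y k 0 + s 1 * y k 1 + s 2 * y k 2 := by
    intro k
    refine (hcoer (x k)).trans_eq ?_
    rw [hx k]
    simp [add_mulVec, smul_mulVec, dotProduct_add, dotProduct_smul, smul_eq_mul]
  have hconv : Tendsto (fun k => s 0 * y k 0 + s 1 * y k 1 + s 2 * y k 2) atTop
      (𝓝 (s 0 * y₀ 0 + s 1 * y₀ 1 + s 2 * y₀ 2)) := by
    have h0 : ∀ i, Tendsto (fun k => y k i) atTop (𝓝 (y₀ i)) :=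
      fun i => (continuous_apply i).continuousAt.tendsto.comp hlim
    exact (((h0 0).const_mul _).add ((h0 1).const_mul _)).add ((h0 2).const_mul _)
  obtain ⟨M, hM⟩ := hconv.bddAbove_range
  have hMb : ∀ k, ‖x k‖ ≤ Real.sqrt (M / c) := by
    intro k
    have h1 : c * ‖x k‖ ^ 2 ≤ M := (key k).trans (hM ⟨k, rfl⟩)
    have hM0 : 0 ≤ M := le_trans (by positivity) h1
    rw [Real.le_sqrt (norm_nonneg _)]
    · rw [le_div_iff₀ hc]; linarith
    · positivity
  have hball : ∀ k, x k ∈ Metric.closedBall (0 : Fin n → ℝ) (Real.sqrt (M / c)) := by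
    intro k
    simpa [Metric.mem_closedBall, dist_zero_right] using hMb k
  obtain ⟨a, -, φ, hφ, hφlim⟩ :=
    tendsto_subseq_of_bounded Metric.isBounded_closedBall hball
  refine ⟨a, ?_⟩
  have hcont : ∀ A : Matrix (Fin n) (Fin n) ℝ,
      Tendsto (fun k => x (φ k) ⬝ᵥ A *ᵥ x (φ k)) atTop (𝓝 (a ⬝ᵥ A *ᵥ a)) :=
    fun A => ((quad_continuous A).continuousAt.tendsto).comp hφlim
  have hlim2 : Tendsto (fun k => y (φ k)) atTop
      (𝓝 (![a ⬝ᵥ A₁ *ᵥ a, a ⬝ᵥ A₂ *ᵥ a, a ⬝ᵥ A₃ *ᵥ a])) := by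
    rw [tendsto_pi_nhds]
    intro i
    have hyk : ∀ k, y (φ k) i
        = ![x (φ k) ⬝ᵥ A₁ *ᵥ x (φ k), x (φ k) ⬝ᵥ A₂ *ᵥ x (φ k),
            x (φ k) ⬝ᵥ A₃ *ᵥ x (φ k)] i := fun k => by rw [hx (φ k)]
    simp only [hyk]
    fin_cases i
    · simpa using hcont A₁
    · simpa using hcont A₂
    · simpa using hcont A₃
  exact tendsto_nhds_unique (hlim.comp hφ.tendsto_atTop) hlim2
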